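/- With the notation of the column-row-wise coded exposure setup, for every canonical basis vector e_i of ℂ^N (1 ≤ i ≤ N), every 1 ≤ v ≤ Ny and every 1 ≤ k ≤ K, the spectral norm satisfies ‖Ḟ_v^k(e_i)‖₂ = (Nx·Ny)^{−1/2}·‖R^k‖₂, where R^k = T^{−1/2}·[r_1^k, r_2^k, …, r_{Nx}^k] ∈ ℝ^{T×Nx} is the matrix whose u-th column is T^{−1/2}·(r_u^k(1),…,r_u^k(T))ᵀ. -/

import Mathlib

open Matrix Finset

namespace HFVcr

/-- The stacked index `m(t,u,v) = (v−1)·Nx·T + (u−1)·T + (t−1)` (with `0`-based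
`Fin` indices) identifying the coordinates of `ℂ^N`, `N = T·Nx·Ny`, with triples. -/
def mIdx {T Nx Ny : ℕ} (p : Fin T × Fin Nx × Fin Ny) : ℕ :=
  p.2.2.val * Nx * T + p.2.1.val * T + p.1.val

/-- The unitary `N`-point DFT matrix, `N = T·Nx·Ny`, with both coordinates of `ℂ^N`
indexed by triples via the stacked index `mIdx`:
`Ψ(m,i) = N^{-1/2}·exp(−j·2π·(i−1)·m/N)`. -/
noncomputable def dft (T Nx Ny : ℕ) :
    Matrix (Fin T × Fin Nx × Fin Ny) (Fin T × Fin Nx × Fin Ny) ℂ :=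
  Matrix.of fun p q =>
    (1 / (Real.sqrt ((T : ℝ) * Nx * Ny) : ℂ)) *
      Complex.exp (-(Complex.I * (2 * (Real.pi : ℂ) * (mIdx q : ℕ) * (mIdx p : ℕ)) /
        ((T : ℂ) * Nx * Ny)))

/-- Squared Euclidean norm `‖f‖₂²` of a vector. -/
noncomputable def euclNormSq {ι : Type*} [Fintype ι] (f : ι → ℂ) : ℝ :=
  ∑ i, ‖f i‖ ^ 2

/-- The submatrix `Ψ_{u,v} ∈ ℂ^{T×N}` of the DFT matrix formed by the rows
`m(t,u,v)`, `1 ≤ t ≤ T`. -/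
noncomputable def Psiuv (T Nx Ny : ℕ) (u : Fin Nx) (v : Fin Ny) :
    Matrix (Fin T) (Fin T × Fin Nx × Fin Ny) ℂ :=
  Matrix.of fun t j => dft T Nx Ny (t, u, v) j

/-- `ḟ_{u,v}^k(x) = R_u^k · Ψ_{u,v} · x ∈ ℂ^T`. -/
noncomputable def fdot {T Nx Ny K : ℕ} (r : Fin Nx → Fin K → Fin T → ℝ)
    (u : Fin Nx) (v : Fin Ny) (k : Fin K) (x : Fin T × Fin Nx × Fin Ny → ℂ) :
    Fin T → ℂ :=
  fun t => (r u k t : ℂ) * (Psiuv T Nx Ny u v *ᵥ x) t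

/-- `Ḟ_v^k(x) ∈ ℂ^{T×Nx}`: the matrix whose `u`-th column is `ḟ_{u,v}^k(x)`. -/
noncomputable def Fvk {T Nx Ny K : ℕ} (r : Fin Nx → Fin K → Fin T → ℝ)
    (v : Fin Ny) (k : Fin K) (x : Fin T × Fin Nx × Fin Ny → ℂ) :
    Matrix (Fin T) (Fin Nx) ℂ :=
  Matrix.of fun t u => fdot r u v k x t

/-- The random row-modulation matrix `R^k = T^{−1/2}·[r_1^k, …, r_{Nx}^k] ∈ ℝ^{T×Nx}`,
whose `u`-th column is `T^{−1/2}·(r_u^k(1),…,r_u^k(T))ᵀ`. -/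
noncomputable def RkMat {T Nx K : ℕ} (r : Fin Nx → Fin K → Fin T → ℝ) (k : Fin K) :
    Matrix (Fin T) (Fin Nx) ℝ :=
  Matrix.of fun t u => (1 / Real.sqrt T) * r u k t

/-- The spectral norm (largest singular value) of a matrix: the operator norm of the
induced linear map between Euclidean spaces. -/
noncomputable def specNorm {m n : Type*} [Fintype m] [Fintype n] [DecidableEq n]
    (A : Matrix m n ℂ) : ℝ :=
  ‖LinearMap.toContinuousLinearMap (Matrix.toEuclideanLin A)‖

lemma eucl_norm_eq_of {ι : Type*} [Fintype ι] (x y : EuclideanSpace ℂ ι)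
    (h : ∀ i, ‖y i‖ = ‖x i‖) : ‖y‖ = ‖x‖ := by
  rw [EuclideanSpace.norm_eq, EuclideanSpace.norm_eq]; simp_rw [h]

lemma specNorm_le_of_forall {m n n' : Type*} [Fintype m] [Fintype n] [DecidableEq n]
    [Fintype n'] [DecidableEq n'] (A : Matrix m n ℂ) (B : Matrix m n' ℂ)
    (h : ∀ x : EuclideanSpace ℂ n, ∃ y : EuclideanSpace ℂ n',
      ‖Matrix.toEuclideanLin A x‖ ≤ ‖Matrix.toEuclideanLin B y‖ ∧ ‖y‖ ≤ ‖x‖) :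
    specNorm A ≤ specNorm B := by
  apply ContinuousLinearMap.opNorm_le_bound _ (norm_nonneg _)
  intro x
  obtain ⟨y, h1, h2⟩ := h x
  calc ‖LinearMap.toContinuousLinearMap (Matrix.toEuclideanLin A) x‖
      = ‖Matrix.toEuclideanLin A x‖ := by rw [LinearMap.coe_toContinuousLinearMap']
    _ ≤ ‖Matrix.toEuclideanLin B y‖ := h1
    _ = ‖LinearMap.toContinuousLinearMap (Matrix.toEuclideanLin B) y‖ := by
        rw [LinearMap.coe_toContinuousLinearMap']
    _ ≤ specNorm B * ‖y‖ := ContinuousLinearMap.le_opNorm _ y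
    _ ≤ specNorm B * ‖x‖ := by
        have := ContinuousLinearMap.opNorm_nonneg
          (LinearMap.toContinuousLinearMap (Matrix.toEuclideanLin B))
        exact mul_le_mul_of_nonneg_left h2 this

lemma specNorm_smul {m n : Type*} [Fintype m] [Fintype n] [DecidableEq n]
    (c : ℂ) (A : Matrix m n ℂ) : specNorm (c • A) = ‖c‖ * specNorm A := by
  unfold specNorm
  rw [_root_.map_smul, _root_.map_smul]
  exact norm_smul c (LinearMap.toContinuousLinearMap (Matrix.toEuclideanLin A))

lemma toEuclideanLin_apply' {m n : Type*} [Fintype m] [Fintype n] [DecidableEq n]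
    (A : Matrix m n ℂ) (x : EuclideanSpace ℂ n) (t : m) :
    Matrix.toEuclideanLin A x t = (A *ᵥ fun j => x j) t := by
  rw [Matrix.toEuclideanLin_apply]

lemma specNorm_diag_mul {m n : Type*} [Fintype m] [Fintype n] [DecidableEq m] [DecidableEq n]
    (d : m → ℂ) (hd : ∀ t, ‖d t‖ = 1) (B : Matrix m n ℂ) :
    specNorm (Matrix.diagonal d * B) = specNorm B := by
  have key : ∀ x : EuclideanSpace ℂ n,
      ‖Matrix.toEuclideanLin (Matrix.diagonal d * B) x‖ = ‖Matrix.toEuclideanLin B x‖ := by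
    intro x
    apply eucl_norm_eq_of
    intro t
    rw [toEuclideanLin_apply', toEuclideanLin_apply', ← Matrix.mulVec_mulVec,
      Matrix.mulVec_diagonal, norm_mul, hd, one_mul]
  apply le_antisymm <;>
    exact specNorm_le_of_forall _ _ fun x => ⟨x, le_of_eq (by rw [key]), le_refl _⟩

lemma specNorm_mul_diag {m n : Type*} [Fintype m] [Fintype n] [DecidableEq n]
    (d : n → ℂ) (hd : ∀ t, ‖d t‖ = 1) (B : Matrix m n ℂ) :
    specNorm (B * Matrix.diagonal d) = specNorm B := by
  have hd0 : ∀ t, d t ≠ 0 := fun t h => by simpa [h] using hd t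
  have hinv : ∀ t, ‖(d t)⁻¹‖ = 1 := fun t => by
    rw [norm_inv, hd, inv_one]
  apply le_antisymm
  · apply specNorm_le_of_forall
    intro x
    refine ⟨(WithLp.equiv 2 (n → ℂ)).symm (fun j => d j * x j), le_of_eq ?_, le_of_eq ?_⟩
    · congr 1
      ext t
      rw [toEuclideanLin_apply', toEuclideanLin_apply', ← Matrix.mulVec_mulVec]
      congr 1
      ext j
      rw [Matrix.mulVec_diagonal]
      simp [WithLp.equiv_symm_apply, PiLp.toLp_apply]
    · apply eucl_norm_eq_of
      intro j
      simp only [WithLp.equiv_symm_apply, PiLp.toLp_apply, norm_mul, hd, one_mul]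
  · apply specNorm_le_of_forall
    intro x
    refine ⟨(WithLp.equiv 2 (n → ℂ)).symm (fun j => (d j)⁻¹ * x j), le_of_eq ?_, le_of_eq ?_⟩
    · congr 1
      ext t
      rw [toEuclideanLin_apply', toEuclideanLin_apply', ← Matrix.mulVec_mulVec]
      congr 1
      ext j
      rw [Matrix.mulVec_diagonal]
      simp only [WithLp.equiv_symm_apply, PiLp.toLp_apply]
      rw [← mul_assoc, mul_inv_cancel₀ (hd0 j), one_mul]
    · apply eucl_norm_eq_of
      intro j
      simp only [WithLp.equiv_symm_apply, PiLp.toLp_apply, norm_mul, hinv, one_mul]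

/-- For every canonical basis vector `e_i` of `ℂ^N`, every `v` and
every `k`, `‖Ḟ_v^k(e_i)‖₂ = (Nx·Ny)^{−1/2}·‖R^k‖₂`. -/
theorem specNorm_Fvk_single (T Nx Ny K : ℕ) (hT : 0 < T) (hNx : 0 < Nx)
    (hNy : 0 < Ny) (hK : 0 < K)
    (r : Fin Nx → Fin K → Fin T → ℝ)
    (hr : ∀ u k t, r u k t = 1 ∨ r u k t = -1)
    (i : Fin T × Fin Nx × Fin Ny) (v : Fin Ny) (k : Fin K) :
    specNorm (Fvk r v k (Pi.single i 1)) =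
      (1 / Real.sqrt ((Nx : ℝ) * Ny)) * specNorm ((RkMat r k).map Complex.ofReal) := by
  set φ : ℕ → ℂ := fun n => Complex.exp (-(Complex.I * (2 * (Real.pi : ℂ) * (mIdx i : ℕ) * (n : ℕ)) /
      ((T : ℂ) * Nx * Ny))) with hφ
  have hφnorm : ∀ n : ℕ, ‖φ n‖ = 1 := by
    intro n
    have he : -(Complex.I * (2 * (Real.pi : ℂ) * (mIdx i : ℕ) * (n : ℕ)) / ((T : ℂ) * Nx * Ny))
        = ((-(2 * Real.pi * (mIdx i : ℕ) * n / ((T : ℝ) * Nx * Ny)) : ℝ) : ℂ) * Complex.I := by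
      push_cast
      ring
    rw [hφ]
    simp only
    rw [he]
    exact Complex.norm_exp_ofReal_mul_I _
  have hφadd : ∀ a b : ℕ, φ (a + b) = φ a * φ b := by
    intro a b
    rw [hφ]
    simp only
    rw [← Complex.exp_add]
    congr 1
    push_cast
    ring
  have hsT : ((Real.sqrt T : ℝ) : ℂ) ≠ 0 := by
    simp only [ne_eq, Complex.ofReal_eq_zero]
    positivity
  set c : ℂ := ((Real.sqrt T : ℝ) : ℂ) / ((Real.sqrt ((T : ℝ) * Nx * Ny) : ℝ) : ℂ) *
      φ (v.val * Nx * T) with hc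
  have hfact : Fvk r v k (Pi.single i 1) =
      c • (Matrix.diagonal (fun t : Fin T => φ t.val) *
        ((RkMat r k).map Complex.ofReal) *
        Matrix.diagonal (fun u : Fin Nx => φ (u.val * T))) := by
    ext t u
    rw [Matrix.smul_apply, Matrix.mul_diagonal, Matrix.diagonal_mul]
    show (fdot r u v k (Pi.single i 1)) t = _
    rw [fdot, Matrix.mulVec_single]
    simp only [Matrix.map_apply, mul_one, MulOpposite.op_one, one_smul]
    show (r u k t : ℂ) * Psiuv T Nx Ny u v t i = _
    rw [Psiuv]
    simp only [Matrix.of_apply]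
    rw [dft]
    simp only [Matrix.of_apply]
    have hm : mIdx ((t, u, v) : Fin T × Fin Nx × Fin Ny) = v.val * Nx * T + u.val * T + t.val := rfl
    have : Complex.exp (-(Complex.I * (2 * (Real.pi : ℂ) * (mIdx i : ℕ) *
        (mIdx ((t, u, v) : Fin T × Fin Nx × Fin Ny) : ℕ)) / ((T : ℂ) * Nx * Ny)))
        = φ (v.val * Nx * T) * φ (u.val * T) * φ t.val := by
      rw [← hφadd, ← hφadd, hm]
    rw [this, hc, RkMat]
    simp only [Matrix.of_apply]
    push_cast
    have hN : ((Real.sqrt ((T : ℝ) * Nx * Ny) : ℝ) : ℂ) = Real.sqrt ((T : ℝ) * Nx * Ny) := rfl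
    field_simp
    ring_nf
    have hTT2 : ((Real.sqrt T : ℝ) : ℂ) * (((Real.sqrt T : ℝ) : ℂ))⁻¹ = 1 :=
      mul_inv_cancel₀ hsT
    linear_combination (-((r u k t : ℂ) * φ (v.val * Nx * T) * φ (T * u.val) * φ t.val *
      (((Real.sqrt ((T : ℝ) * Nx * Ny) : ℝ) : ℂ))⁻¹)) * hTT2
  rw [hfact, specNorm_smul, specNorm_mul_diag _ (fun u => hφnorm _),
    specNorm_diag_mul _ (fun t => hφnorm _)]
  congr 1
  rw [hc, norm_mul, hφnorm, mul_one, norm_div]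
  have h1 : ‖((Real.sqrt T : ℝ) : ℂ)‖ = Real.sqrt T := by
    rw [Complex.norm_real, Real.norm_eq_abs, abs_of_nonneg (Real.sqrt_nonneg _)]
  have h2 : ‖((Real.sqrt ((T : ℝ) * Nx * Ny) : ℝ) : ℂ)‖ = Real.sqrt ((T : ℝ) * Nx * Ny) := by
    rw [Complex.norm_real, Real.norm_eq_abs, abs_of_nonneg (Real.sqrt_nonneg _)]
  rw [h1, h2]
  have h3 : (T : ℝ) * Nx * Ny = (T : ℝ) * ((Nx : ℝ) * Ny) := by ring
  rw [h3, Real.sqrt_mul (by positivity)]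
  have hT' : Real.sqrt T ≠ 0 := by positivity
  field_simp

end HFVcr
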